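/- Let A and E be K×K real matrices and let γ > 0, δ ≥ 0 with γ > 5·√K·δ. Assume A is invertible with smallest singular value at least γ (i.e., ‖A x‖ ≥ γ‖x‖ for every vector x ∈ ℝ^K), and assume the Frobenius norm of E satisfies ‖E‖_F ≤ √K·δ. Then det(A+E)/det(A) ≥ (1 − δ/γ)^K. -/

import Mathlib

open Finset Matrix

-- scalar supporting-line lemma
lemma L1 {s t : ℝ} (hs : 0 < s) (hs5 : s ≤ 1/5) (ht : 0 ≤ t) (ht5 : t ≤ 1/5) :
    Real.log (1 - s) + (s^2 - t^2) / (2*s*(1-s)) ≤ Real.log (1 - t) := by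
  have h1t : (0:ℝ) < 1 - t := by linarith
  have h1s : (0:ℝ) < 1 - s := by linarith
  have key : Real.log (1-s) - Real.log (1-t) ≤ (t - s)/(1-t) := by
    have := Real.log_le_sub_one_of_pos (x := (1-s)/(1-t)) (by positivity)
    rw [Real.log_div (by linarith) (by linarith)] at this
    calc Real.log (1-s) - Real.log (1-t) ≤ (1-s)/(1-t) - 1 := this
      _ = (t - s)/(1-t) := by field_simp; ring
  have key2 : (t - s)/(1-t) ≤ (t^2 - s^2)/(2*s*(1-s)) := by
    rw [div_le_div_iff₀ h1t (by positivity)]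
    nlinarith [sq_nonneg (s - t), sq_nonneg (s+t)]
  have hneg : (s^2 - t^2) / (2*s*(1-s)) = -((t^2 - s^2) / (2*s*(1-s))) := by ring
  linarith

-- product lemma
lemma L2 {K : ℕ} {s : ℝ} (hs : 0 < s) (hs5 : s ≤ 1/5) (t : Fin K → ℝ)
    (ht0 : ∀ i, 0 ≤ t i) (ht5 : ∀ i, t i ≤ 1/5)
    (hsum : ∑ i, (t i)^2 ≤ K * s^2) :
    (1 - s)^K ≤ ∏ i, (1 - t i) := by
  have h1t : ∀ i, (0:ℝ) < 1 - t i := fun i => by have := ht5 i; linarith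
  have hlog : (K : ℝ) * Real.log (1 - s) ≤ ∑ i, Real.log (1 - t i) := by
    have : ∑ i, (Real.log (1-s) + ((s^2 - (t i)^2) / (2*s*(1-s)))) ≤
        ∑ i, Real.log (1 - t i) := by
      apply Finset.sum_le_sum
      intro i _
      exact L1 hs hs5 (ht0 i) (ht5 i)
    rw [Finset.sum_add_distrib] at this
    simp only [Finset.sum_const, card_univ, Fintype.card_fin, nsmul_eq_mul] at this
    have h2 : 0 ≤ ∑ i, ((s^2 - (t i)^2) / (2*s*(1-s))) := by
      rw [← Finset.sum_div]
      apply div_nonneg _ (by nlinarith)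
      have : ∑ i, (s^2 - (t i)^2) = K * s^2 - ∑ i, (t i)^2 := by
        rw [Finset.sum_sub_distrib]
        simp [Finset.sum_const, card_univ, mul_comm]
      linarith [this]
    linarith
  calc (1 - s)^K = Real.exp (K * Real.log (1-s)) := by
        rw [← Real.exp_log (by linarith : (0:ℝ) < 1 - s), ← Real.exp_nat_mul]
        simp [Real.exp_log (by linarith : (0:ℝ) < 1 - s)]
    _ ≤ Real.exp (∑ i, Real.log (1 - t i)) := Real.exp_le_exp.mpr hlog
    _ = ∏ i, Real.exp (Real.log (1 - t i)) := Real.exp_sum _ _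
    _ = ∏ i, (1 - t i) := by
        apply Finset.prod_congr rfl
        intro i _
        exact Real.exp_log (h1t i)

lemma frob_eq (n : ℕ) (V B : Matrix (Fin n) (Fin n) ℂ) (hV : star V * V = 1) :
    ∑ i, ∑ j, Complex.normSq ((star V * B * V) i j) = ∑ i, ∑ j, Complex.normSq (B i j) := by
  have hVV : V * star V = 1 := mul_eq_one_comm.mp hV
  have trace_eq : ∀ X : Matrix (Fin n) (Fin n) ℂ,
      (Xᴴ * X).trace = ((∑ i, ∑ j, Complex.normSq (X i j) : ℝ) : ℂ) := by
    intro X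
    rw [Matrix.trace]
    push_cast
    rw [Finset.sum_comm]
    apply Finset.sum_congr rfl; intro i _
    rw [Matrix.diag, Matrix.mul_apply]
    apply Finset.sum_congr rfl; intro j _
    rw [Matrix.conjTranspose_apply, Complex.star_def, ← Complex.normSq_eq_conj_mul_self]
  have hC : (star V * B * V)ᴴ * (star V * B * V) = star V * (Bᴴ * B) * V := by
    rw [Matrix.star_eq_conjTranspose]
    simp only [Matrix.conjTranspose_mul, Matrix.conjTranspose_conjTranspose]
    rw [Matrix.star_eq_conjTranspose] at hVV
    calc Vᴴ * (Bᴴ * V) * (Vᴴ * B * V) = Vᴴ * Bᴴ * (V * Vᴴ) * (B * V) := by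
          noncomm_ring
      _ = Vᴴ * (Bᴴ * B) * V := by
          rw [hVV]; noncomm_ring
  have htr : ((star V * B * V)ᴴ * (star V * B * V)).trace = (Bᴴ * B).trace := by
    rw [hC, Matrix.trace_mul_cycle, ← Matrix.mul_assoc, hVV, Matrix.one_mul]
  have := (trace_eq _).symm.trans (htr.trans (trace_eq B))
  exact_mod_cast this

lemma schur_aux (K : ℕ) : ∀ B : Matrix (Fin K) (Fin K) ℂ,
    ∃ d : Fin K → ℂ, (1 + B).det = ∏ i, (1 + d i) ∧
      ∑ i, Complex.normSq (d i) ≤ ∑ i, ∑ j, Complex.normSq (B i j) := by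
  induction K with
  | zero =>
    intro B
    exact ⟨Fin.elim0, by simp [Matrix.det_fin_zero], by simp⟩
  | succ K ih =>
    intro B
    -- eigenvalue
    obtain ⟨μ, hμ⟩ := Module.End.exists_eigenvalue (Matrix.mulVecLin B)
    obtain ⟨v, hv⟩ := hμ.exists_hasEigenvector
    have hveq : B.mulVec v = μ • v := hv.apply_eq_smul
    -- move to EuclideanSpace
    set V := EuclideanSpace ℂ (Fin (K+1)) with hVdef
    let v' : V := (WithLp.equiv 2 _).symm v
    have hv'0 : v' ≠ 0 := by
      exact fun h => hv.right (by simpa [v'] using congrArg WithLp.ofLp h)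
    let u : V := ‖v'‖⁻¹ • v'
    have hu1 : ‖u‖ = 1 := norm_smul_inv_norm hv'0
    have hueq : ∀ i, u i = (‖v'‖⁻¹ : ℝ) • v i := fun i => rfl
    have hueq' : ∀ i, u i = ((‖v'‖⁻¹ : ℝ) : ℂ) * v i := by
      intro i; rw [hueq i, Complex.real_smul]
    have hueig : B.mulVec (fun i => u i) = μ • (fun i => u i) := by
      have : (fun i => u i) = ((‖v'‖⁻¹ : ℝ) : ℂ) • v := by
        funext i; rw [hueq' i]; rfl
      rw [this, Matrix.mulVec_smul, hveq, smul_comm]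
    -- orthonormal basis with b 0 = u
    have hcard : Module.finrank ℂ V = Fintype.card (Fin (K+1)) := by
      show Module.finrank ℂ (EuclideanSpace ℂ (Fin (K+1))) = _
      rw [finrank_euclideanSpace_fin, Fintype.card_fin]
    have horth : Orthonormal ℂ (Set.restrict {(0 : Fin (K+1))} (fun _ => u)) := by
      constructor
      · intro i; exact hu1
      · intro i j hij
        exact absurd (Subtype.ext ((i.2 : i.1 = 0).trans (j.2 : j.1 = 0).symm)) hij
    obtain ⟨b, hb0⟩ := horth.exists_orthonormalBasis_extension_of_card_eq hcard
    have hb0' : b 0 = u := hb0 0 rfl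
    -- unitary matrix with columns b j
    let U : Matrix (Fin (K+1)) (Fin (K+1)) ℂ := Matrix.of fun i j => b j i
    have hinner : ∀ i j, ∑ k, (starRingEnd ℂ) (b i k) * b j k = if i = j then 1 else 0 := by
      intro i j
      have h := orthonormal_iff_ite.mp b.orthonormal i j
      rw [PiLp.inner_apply] at h
      have h2 : ∑ k, (starRingEnd ℂ) (b i k) * b j k = ∑ k, b j k * (starRingEnd ℂ) (b i k) :=
        Finset.sum_congr rfl fun k _ => mul_comm _ _
      rw [h2]; simpa [RCLike.inner_apply] using h
    have hUU : star U * U = 1 := by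
      ext i j
      rw [Matrix.mul_apply, Matrix.one_apply]
      simp only [Matrix.star_apply, U, Matrix.of_apply, Complex.star_def]
      exact hinner i j
    set C := star U * B * U with hCdef
    have hC0 : ∀ i, C i 0 = if i = 0 then μ else 0 := by
      intro i
      have hBU : ∀ k, (B * U) k 0 = μ * u k := by
        intro k
        rw [Matrix.mul_apply]
        have h1 : ∑ m, B k m * U m 0 = B.mulVec (fun i => u i) k := by
          rw [Matrix.mulVec, dotProduct]
          apply Finset.sum_congr rfl
          intro m _
          congr 1
          show b 0 m = u m
          rw [hb0']
        rw [h1, hueig]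
        rfl
      have : C i 0 = ∑ k, (starRingEnd ℂ) (b i k) * ((B * U) k 0) := by
        rw [hCdef, Matrix.mul_assoc, Matrix.mul_apply]
        apply Finset.sum_congr rfl
        intro k _
        simp [Matrix.star_apply, U, Complex.star_def]
      rw [this]
      have : ∑ k, (starRingEnd ℂ) (b i k) * ((B * U) k 0) = μ * ∑ k, (starRingEnd ℂ) (b i k) * b 0 k := by
        rw [Finset.mul_sum]
        apply Finset.sum_congr rfl
        intro k _
        rw [hBU k]
        have : b 0 k = u k := by rw [hb0']
        rw [this]; ring
      rw [this, hinner i 0]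
      by_cases h : i = 0 <;> simp [h]
    have hC00 : C 0 0 = μ := by rw [hC0 0]; simp
    -- determinant invariance
    have hone : (1 + C).det = (1 + B).det := by
      have hexp : 1 + C = star U * (1 + B) * U := by
        rw [Matrix.mul_add, Matrix.mul_one, Matrix.add_mul, hUU, hCdef]
      have hdetU : (star U).det * U.det = 1 := by
        have := congrArg Matrix.det hUU
        rwa [Matrix.det_mul, Matrix.det_one] at this
      rw [hexp, Matrix.det_mul, Matrix.det_mul]
      calc (star U).det * (1 + B).det * U.det
          = (1 + B).det * ((star U).det * U.det) := by ring
        _ = (1 + B).det := by rw [hdetU, mul_one]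
    -- deflation
    set D := C.submatrix Fin.succ Fin.succ with hDdef
    have hsub : (1 + C).submatrix Fin.succ Fin.succ = 1 + D := by
      ext i j
      simp only [Matrix.submatrix_apply, Matrix.add_apply, hDdef]
      congr 1
      by_cases h : i = j
      · subst h; simp
      · rw [Matrix.one_apply_ne h, Matrix.one_apply_ne]
        simp [Fin.succ_inj, h]
    have hsplit : (1 + C).det = (1 + μ) * (1 + D).det := by
      rw [Matrix.det_succ_column_zero]
      rw [Finset.sum_eq_single (0 : Fin (K+1))]
      · have h00 : (1 + C) 0 0 = 1 + μ := by
          simp [Matrix.add_apply, hC00]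
        have hsa : (Fin.succAbove (0 : Fin (K+1))) = Fin.succ := by
          funext i; exact Fin.zero_succAbove i
        rw [h00, hsa, hsub]
        simp
      · intro i _ hi
        have : (1 + C) i 0 = 0 := by
          rw [Matrix.add_apply, Matrix.one_apply_ne hi, hC0 i, if_neg hi]
          ring
        rw [this]; ring
      · intro h; exact absurd (Finset.mem_univ _) h
    obtain ⟨d', hdet', hsum'⟩ := ih D
    refine ⟨Fin.cons μ d', ?_, ?_⟩
    · rw [← hone, hsplit, hdet', Fin.prod_univ_succ]
      simp
    · have hfC : ∑ i, ∑ j, Complex.normSq (C i j) = ∑ i, ∑ j, Complex.normSq (B i j) :=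
        frob_eq _ U B hUU
      rw [← hfC, Fin.sum_univ_succ]
      simp only [Fin.cons_zero, Fin.cons_succ]
      have hout : ∑ i, ∑ j, Complex.normSq (C i j)
          = (Complex.normSq (C 0 0) + ∑ j : Fin K, Complex.normSq (C 0 j.succ))
            + ∑ i : Fin K, (Complex.normSq (C i.succ 0) + ∑ j : Fin K, Complex.normSq (C i.succ j.succ)) := by
        rw [Fin.sum_univ_succ]
        congr 1
        · rw [Fin.sum_univ_succ]
        · apply Finset.sum_congr rfl
          intro i _
          rw [Fin.sum_univ_succ]
      rw [hout, hC00]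
      have h1 : ∑ i, Complex.normSq (d' i) ≤ ∑ i : Fin K, ∑ j : Fin K, Complex.normSq (C i.succ j.succ) := by
        refine hsum'.trans_eq ?_
        rfl
      have h2 : ∑ i : Fin K, ∑ j : Fin K, Complex.normSq (C i.succ j.succ)
          ≤ ∑ i : Fin K, (Complex.normSq (C i.succ 0) + ∑ j : Fin K, Complex.normSq (C i.succ j.succ)) := by
        apply Finset.sum_le_sum
        intro i _
        have := Complex.normSq_nonneg (C i.succ 0)
        linarith
      have h3 : (0:ℝ) ≤ ∑ j : Fin K, Complex.normSq (C 0 j.succ) :=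
        Finset.sum_nonneg fun j _ => Complex.normSq_nonneg _
      linarith

section aux
variable {K : ℕ}

-- positivity of det(1+B) when Frobenius norm < 1
lemma det_one_add_pos (B : Matrix (Fin K) (Fin K) ℝ)
    (hFB : ∑ i, ∑ j, (B i j)^2 < 1) : 0 < (1 + B).det := by
  have hcs : ∀ (x : ℝ) (v : Fin K → ℝ), ∑ i, ((x • B).mulVec v i)^2 ≤
      x^2 * (∑ i, ∑ j, (B i j)^2) * ∑ i, (v i)^2 := by
    intro x v
    have h1 : ∀ i, ((x • B).mulVec v i)^2 ≤ x^2 * ((∑ j, (B i j)^2) * ∑ j, (v j)^2) := by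
      intro i
      have : (x • B).mulVec v i = x * ∑ j, B i j * v j := by
        simp [Matrix.mulVec, dotProduct, Finset.mul_sum, mul_assoc]
      rw [this, mul_pow]
      exact mul_le_mul_of_nonneg_left
        (Finset.sum_mul_sq_le_sq_mul_sq univ (fun j => B i j) v) (sq_nonneg x)
    calc ∑ i, ((x • B).mulVec v i)^2 ≤ ∑ i, x^2 * ((∑ j, (B i j)^2) * ∑ j, (v j)^2) :=
          Finset.sum_le_sum fun i _ => h1 i
      _ = x^2 * (∑ i, ∑ j, (B i j)^2) * ∑ i, (v i)^2 := by
          rw [← Finset.mul_sum, ← Finset.sum_mul]; ring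
  set f : ℝ → ℝ := fun x => (1 + x • B).det with hf
  have hfc : Continuous f := by
    apply Continuous.matrix_det
    exact continuous_const.add (continuous_id.smul continuous_const)
  have hne : ∀ x ∈ Set.Icc (0:ℝ) 1, f x ≠ 0 := by
    intro x hx hzero
    obtain ⟨v, hv0, hveq⟩ := (Matrix.exists_mulVec_eq_zero_iff).mpr hzero
    have hvi : ∀ i, v i = -((x • B).mulVec v i) := by
      intro i
      have := congrFun hveq i
      rw [Matrix.add_mulVec, Matrix.one_mulVec] at this
      have : v i + (x • B).mulVec v i = 0 := this
      linarith
    have hvpos : 0 < ∑ i, (v i)^2 := by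
      obtain ⟨i, hi⟩ := Function.ne_iff.mp hv0
      have : (0:ℝ) < (v i)^2 := lt_of_le_of_ne (sq_nonneg _) (Ne.symm (pow_ne_zero 2 hi))
      exact this.trans_le (Finset.single_le_sum (fun j _ => sq_nonneg (v j)) (mem_univ i))
    have hsum : ∑ i, (v i)^2 ≤ x^2 * (∑ i, ∑ j, (B i j)^2) * ∑ i, (v i)^2 := by
      calc ∑ i, (v i)^2 = ∑ i, ((x • B).mulVec v i)^2 := by
            apply Finset.sum_congr rfl; intro i _; rw [hvi i]; ring
        _ ≤ _ := hcs x v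
    have hx2 : x^2 ≤ 1 := by
      rcases hx with ⟨h0, h1⟩; nlinarith
    have hFB0 : 0 ≤ ∑ i, ∑ j, (B i j)^2 :=
      Finset.sum_nonneg fun i _ => Finset.sum_nonneg fun j _ => sq_nonneg _
    have h1 : x^2 * (∑ i, ∑ j, (B i j)^2) ≤ ∑ i, ∑ j, (B i j)^2 := by nlinarith
    have h2 : x^2 * (∑ i, ∑ j, (B i j)^2) * (∑ i, (v i)^2) ≤ (∑ i, ∑ j, (B i j)^2) * (∑ i, (v i)^2) :=
      mul_le_mul_of_nonneg_right h1 hvpos.le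
    have h3 : (∑ i, ∑ j, (B i j)^2) * (∑ i, (v i)^2) < 1 * (∑ i, (v i)^2) :=
      mul_lt_mul_of_pos_right hFB hvpos
    rw [one_mul] at h3
    linarith
  have hf0 : f 0 = 1 := by simp [hf]
  by_contra hle
  push_neg at hle
  have h01 : (0:ℝ) ≤ 1 := zero_le_one
  have := intermediate_value_Icc' h01 hfc.continuousOn
  have h0mem : (0:ℝ) ∈ Set.Icc (f 1) (f 0) := by
    constructor
    · simpa [hf] using hle
    · rw [hf0]; exact zero_le_one
  obtain ⟨x, hx, hfx⟩ := this h0mem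
  exact hne x hx hfx

end aux

/-- Determinant perturbation bound: if `A` has smallest singular value at least `γ`
(in the Euclidean norm sense) and `‖E‖_F ≤ √K·δ` with `γ > 5·√K·δ`, then
`det(A+E)/det(A) ≥ (1 − δ/γ)^K`. -/
theorem stmt_1 (K : ℕ) (A E : Matrix (Fin K) (Fin K) ℝ) (γ δ : ℝ)
    (hγ : 0 < γ) (hδ : 0 ≤ δ) (hsmall : 5 * Real.sqrt K * δ < γ)
    (hAinv : IsUnit A.det)
    (hsv : ∀ x : Fin K → ℝ,
      γ * Real.sqrt (∑ i, x i ^ 2) ≤ Real.sqrt (∑ i, A.mulVec x i ^ 2))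
    (hF : Real.sqrt (∑ i, ∑ j, E i j ^ 2) ≤ Real.sqrt K * δ) :
    (1 - δ / γ) ^ K ≤ (A + E).det / A.det := by
  have hdet0 : A.det ≠ 0 := hAinv.ne_zero
  rcases Nat.eq_zero_or_pos K with hK0 | hKpos
  · subst hK0
    simp [Matrix.det_fin_zero]
  rcases eq_or_lt_of_le hδ with hδ0 | hδpos
  · -- δ = 0 forces E = 0
    have hnn : (0:ℝ) ≤ ∑ i, ∑ j, E i j ^2 := by positivity
    have hS0 : ∑ i, ∑ j, E i j ^2 = 0 := by
      have h0 : Real.sqrt (∑ i, ∑ j, E i j ^ 2) ≤ 0 := by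
        rw [← hδ0] at hF; simpa using hF
      nlinarith [Real.sqrt_nonneg (∑ i, ∑ j, E i j ^2), Real.sq_sqrt hnn]
    have hE : E = 0 := by
      ext i j
      have hrow : ∑ j, E i j ^ 2 = 0 :=
        (Finset.sum_eq_zero_iff_of_nonneg
          (fun i _ => Finset.sum_nonneg fun j _ => sq_nonneg (E i j))).mp hS0 i (mem_univ i)
      have hij : E i j ^ 2 = 0 :=
        (Finset.sum_eq_zero_iff_of_nonneg (fun j _ => sq_nonneg (E i j))).mp hrow j (mem_univ j)
      exact (pow_eq_zero_iff two_ne_zero).mp hij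
    rw [hE, ← hδ0]
    simp [div_self hdet0]
  -- main case
  set s := δ / γ with hs
  have hγ' : γ ≠ 0 := ne_of_gt hγ
  have hKnn : (0:ℝ) ≤ (K:ℝ) := Nat.cast_nonneg K
  have hKs : Real.sqrt K * s < 1/5 := by
    have h1 : Real.sqrt K * s = (Real.sqrt K * δ)/γ := by rw [hs, mul_div_assoc]
    rw [h1, div_lt_iff₀ hγ]
    linarith
  have hsqK1 : (1:ℝ) ≤ Real.sqrt K := by
    have h1 : (1:ℝ) ≤ (K:ℝ) := by exact_mod_cast hKpos
    calc (1:ℝ) = Real.sqrt 1 := Real.sqrt_one.symm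
      _ ≤ Real.sqrt K := Real.sqrt_le_sqrt h1
  have hspos : 0 < s := div_pos hδpos hγ
  have hs5 : s ≤ 1/5 := by nlinarith
  have hKs2 : (K:ℝ) * s^2 < (1/5)^2 := by
    have h1 : (Real.sqrt K * s)^2 < (1/5)^2 := by
      apply pow_lt_pow_left₀ hKs _ (by norm_num)
      positivity
    rwa [mul_pow, Real.sq_sqrt hKnn] at h1
  have hFE : ∑ i, ∑ j, E i j ^ 2 ≤ (K:ℝ) * δ^2 := by
    have hnn : (0:ℝ) ≤ ∑ i, ∑ j, E i j ^2 := by positivity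
    have h := mul_self_le_mul_self (Real.sqrt_nonneg _) hF
    rw [Real.mul_self_sqrt hnn] at h
    nlinarith [Real.mul_self_sqrt hKnn]
  set B := A⁻¹ * E with hB
  clear_value B
  have hcol : ∀ j, γ^2 * ∑ i, (B i j)^2 ≤ ∑ i, (E i j)^2 := by
    intro j
    have hx : A.mulVec (fun i => B i j) = fun i => E i j := by
      have h1 : (fun i => B i j) = A⁻¹.mulVec (fun k => E k j) := by
        funext i; rw [hB]; simp [Matrix.mul_apply, Matrix.mulVec, dotProduct]
      rw [h1, Matrix.mulVec_mulVec, Matrix.mul_nonsing_inv A hAinv, Matrix.one_mulVec]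
    have h2 := hsv (fun i => B i j)
    rw [hx] at h2
    have hXnn : (0:ℝ) ≤ ∑ i, (B i j)^2 := by positivity
    have hYnn : (0:ℝ) ≤ ∑ i, (E i j)^2 := by positivity
    have h3 := mul_self_le_mul_self (by positivity) h2
    rw [Real.mul_self_sqrt hYnn] at h3
    nlinarith [Real.mul_self_sqrt hXnn]
  have hFB : ∑ i, ∑ j, (B i j)^2 ≤ (K:ℝ) * s^2 := by
    have hsumc : γ^2 * ∑ j, ∑ i, (B i j)^2 ≤ ∑ j, ∑ i, (E i j)^2 := by
      rw [Finset.mul_sum]; exact Finset.sum_le_sum fun j _ => hcol j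
    have hcomm : ∑ i, ∑ j, (B i j)^2 = ∑ j, ∑ i, (B i j)^2 := Finset.sum_comm
    have hcomm' : ∑ j, ∑ i, (E i j)^2 = ∑ i, ∑ j, (E i j)^2 := Finset.sum_comm
    have hγ2 : (0:ℝ) < γ^2 := by positivity
    rw [hcomm, hs]
    rw [div_pow, ← mul_div_assoc, le_div_iff₀ hγ2]
    calc (∑ j, ∑ i, (B i j)^2) * γ^2 = γ^2 * ∑ j, ∑ i, (B i j)^2 := by ring
      _ ≤ ∑ j, ∑ i, (E i j)^2 := hsumc
      _ = ∑ i, ∑ j, (E i j)^2 := hcomm'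
      _ ≤ (K:ℝ) * δ^2 := hFE
  have hFB1 : ∑ i, ∑ j, (B i j)^2 < 1 := by
    exact (hFB.trans_lt hKs2).trans_le (by norm_num)
  have hpos : 0 < (1 + B).det := det_one_add_pos B hFB1
  have hfact : A + E = A * (1 + B) := by
    rw [Matrix.mul_add, Matrix.mul_one, hB, ← Matrix.mul_assoc,
      Matrix.mul_nonsing_inv A hAinv, Matrix.one_mul]
  have hratio : (A + E).det / A.det = (1 + B).det := by
    rw [hfact, Matrix.det_mul, mul_div_cancel_left₀ _ hdet0]
  rw [hratio]
  -- complexification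
  set Bc : Matrix (Fin K) (Fin K) ℂ := B.map (Complex.ofRealHom) with hBc
  clear_value Bc
  obtain ⟨d, hd1, hd2⟩ := schur_aux K Bc
  have hBcF : ∑ i, ∑ j, Complex.normSq (Bc i j) = ∑ i, ∑ j, (B i j)^2 := by
    apply Finset.sum_congr rfl; intro i _
    apply Finset.sum_congr rfl; intro j _
    rw [hBc, Matrix.map_apply]
    show Complex.normSq ((B i j : ℝ) : ℂ) = _
    rw [Complex.normSq_ofReal]; ring
  set t : Fin K → ℝ := fun i => ‖d i‖ with htdef
  have ht2 : ∀ i, (t i)^2 = Complex.normSq (d i) := fun i => Complex.sq_norm (d i)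
  have htsum : ∑ i, (t i)^2 ≤ (K:ℝ) * s^2 := by
    calc ∑ i, (t i)^2 = ∑ i, Complex.normSq (d i) := Finset.sum_congr rfl fun i _ => ht2 i
      _ ≤ ∑ i, ∑ j, Complex.normSq (Bc i j) := hd2
      _ = ∑ i, ∑ j, (B i j)^2 := hBcF
      _ ≤ (K:ℝ) * s^2 := hFB
  have ht0 : ∀ i, 0 ≤ t i := fun i => norm_nonneg _
  have ht5 : ∀ i, t i ≤ 1/5 := by
    intro i
    have h1 : (t i)^2 ≤ (K:ℝ)*s^2 := by
      refine le_trans ?_ htsum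
      exact Finset.single_le_sum (fun j _ => sq_nonneg (t j)) (mem_univ i)
    nlinarith [ht0 i]
  have hmap : ((1:Matrix (Fin K) (Fin K) ℝ) + B).map (Complex.ofRealHom) = 1 + Bc := by
    ext i j
    simp only [Matrix.map_apply, Matrix.add_apply, hBc, map_add]
    by_cases h : i = j
    · subst h; simp
    · simp [Matrix.one_apply_ne h]
  have hdetc : (((1 + B).det : ℝ) : ℂ) = ∏ i, (1 + d i) := by
    rw [← hd1]
    have h := RingHom.map_det Complex.ofRealHom (1 + B)
    rw [RingHom.mapMatrix_apply, hmap] at h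
    exact h
  have habs : (1 + B).det = ∏ i, ‖1 + d i‖ := by
    have h1 : ‖(((1 + B).det : ℝ) : ℂ)‖ = ∏ i, ‖1 + d i‖ := by
      rw [hdetc, norm_prod]
    rw [Complex.norm_real, Real.norm_eq_abs, abs_of_pos hpos] at h1
    exact h1
  rw [habs]
  have hterm : ∀ i, 1 - t i ≤ ‖1 + d i‖ := by
    intro i
    have h := norm_add_le (1 + d i) (-(d i))
    have h1 : ‖1 + d i + -(d i)‖ = 1 := by simp
    have h2 : ‖-(d i)‖ = ‖d i‖ := by simp
    rw [h1, h2] at h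
    simp only [htdef]
    linarith
  calc (1 - s)^K ≤ ∏ i, (1 - t i) := L2 hspos hs5 t ht0 ht5 htsum
    _ ≤ ∏ i, ‖1 + d i‖ := by
        apply Finset.prod_le_prod
        · intro i _; linarith [ht5 i]
        · intro i _; exact hterm i
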